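/- Let V₁ and V₂ be nonzero finite-dimensional vector spaces over ℂ, let f₁ ∈ End(V₁) and f₂ ∈ End(V₂) be linear endomorphisms, let c₁, c₂ ∈ ℂ and k₁, k₂ ≥ 1 be such that the minimal polynomial of fᵢ is (X − cᵢ)^{kᵢ} for i = 1, 2. Then the minimal polynomial of the endomorphism f₁ ⊗ id + id ⊗ f₂ of V₁ ⊗[ℂ] V₂ is (X − (c₁ + c₂))^{k₁ + k₂ − 1}. -/

import Mathlib

open Polynomial TensorProduct

lemma tmul_ne_zero' {V₁ V₂ : Type*} [AddCommGroup V₁] [Module ℂ V₁] [AddCommGroup V₂]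
    [Module ℂ V₂] {x : V₁} {y : V₂} (hx : x ≠ 0) (hy : y ≠ 0) : x ⊗ₜ[ℂ] y ≠ 0 := by
  rw [Ne, ← Module.forall_dual_apply_eq_zero_iff ℂ x] at hx
  rw [Ne, ← Module.forall_dual_apply_eq_zero_iff ℂ y] at hy
  push_neg at hx hy
  obtain ⟨φ, hφ⟩ := hx
  obtain ⟨ψ, hψ⟩ := hy
  intro h
  have : (TensorProduct.lid ℂ ℂ) (TensorProduct.map φ ψ (x ⊗ₜ[ℂ] y)) = φ x * ψ y := by
    simp [TensorProduct.map_tmul, smul_eq_mul]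
  rw [h] at this
  simp only [map_zero] at this
  exact mul_ne_zero hφ hψ this.symm


/-- If the minimal polynomial of `fᵢ` is `(X - cᵢ)^kᵢ`, then the minimal polynomial of
`f₁ ⊗ id + id ⊗ f₂` on `V₁ ⊗ V₂` is `(X - (c₁ + c₂))^(k₁ + k₂ - 1)` (key linear-algebra
fact of the appendix Lemma; the exponent there is corrected to `k₁ + k₂ - 1`). -/
theorem minpoly_tensor_sum
    (V₁ V₂ : Type*) [AddCommGroup V₁] [Module ℂ V₁] [AddCommGroup V₂] [Module ℂ V₂]
    [Nontrivial V₁] [Nontrivial V₂]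
    [FiniteDimensional ℂ V₁] [FiniteDimensional ℂ V₂]
    (f₁ : V₁ →ₗ[ℂ] V₁) (f₂ : V₂ →ₗ[ℂ] V₂) (c₁ c₂ : ℂ) (k₁ k₂ : ℕ)
    (hk₁ : 1 ≤ k₁) (hk₂ : 1 ≤ k₂)
    (h₁ : minpoly ℂ f₁ = (X - C c₁) ^ k₁)
    (h₂ : minpoly ℂ f₂ = (X - C c₂) ^ k₂) :
    minpoly ℂ (LinearMap.rTensor V₂ f₁ + LinearMap.lTensor V₁ f₂)
      = (X - C (c₁ + c₂)) ^ (k₁ + k₂ - 1) := by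
  obtain ⟨a, rfl⟩ : ∃ a, k₁ = a + 1 := ⟨k₁ - 1, (Nat.succ_pred_eq_of_pos hk₁).symm⟩
  obtain ⟨b, rfl⟩ : ∃ b, k₂ = b + 1 := ⟨k₂ - 1, (Nat.succ_pred_eq_of_pos hk₂).symm⟩
  have hn : (a + 1) + (b + 1) - 1 = a + b + 1 := by omega
  rw [hn]
  set F : Module.End ℂ (V₁ ⊗[ℂ] V₂) := LinearMap.rTensor V₂ f₁ + LinearMap.lTensor V₁ f₂ with hF
  set g₁ : Module.End ℂ V₁ := f₁ - algebraMap ℂ _ c₁ with hg₁def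
  set g₂ : Module.End ℂ V₂ := f₂ - algebraMap ℂ _ c₂ with hg₂def
  -- nilpotency facts
  have hg₁ : g₁ ^ (a + 1) = 0 := by
    have := minpoly.aeval ℂ f₁
    rw [h₁] at this
    simpa [hg₁def, map_pow, map_sub, aeval_X, aeval_C] using this
  have hg₂ : g₂ ^ (b + 1) = 0 := by
    have := minpoly.aeval ℂ f₂
    rw [h₂] at this
    simpa [hg₂def, map_pow, map_sub, aeval_X, aeval_C] using this
  have hg₁' : g₁ ^ a ≠ 0 := by
    intro h
    have hz : aeval f₁ ((X - C c₁) ^ a) = 0 := by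
      simpa [map_pow, map_sub, aeval_X, aeval_C, hg₁def] using h
    have hdvd := minpoly.dvd ℂ f₁ hz
    rw [h₁] at hdvd
    have hne : ((X - C c₁ : ℂ[X]) ^ a) ≠ 0 := pow_ne_zero _ (X_sub_C_ne_zero c₁)
    have := Polynomial.natDegree_le_of_dvd hdvd hne
    simp [natDegree_pow, natDegree_X_sub_C] at this
  have hg₂' : g₂ ^ b ≠ 0 := by
    intro h
    have hz : aeval f₂ ((X - C c₂) ^ b) = 0 := by
      simpa [map_pow, map_sub, aeval_X, aeval_C, hg₂def] using h
    have hdvd := minpoly.dvd ℂ f₂ hz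
    rw [h₂] at hdvd
    have hne : ((X - C c₂ : ℂ[X]) ^ b) ≠ 0 := pow_ne_zero _ (X_sub_C_ne_zero c₂)
    have := Polynomial.natDegree_le_of_dvd hdvd hne
    simp [natDegree_pow, natDegree_X_sub_C] at this
  set A : Module.End ℂ (V₁ ⊗[ℂ] V₂) := LinearMap.rTensor V₂ g₁ with hA
  set B : Module.End ℂ (V₁ ⊗[ℂ] V₂) := LinearMap.lTensor V₁ g₂ with hB
  have hcomm : Commute A B := by
    ext v₁ v₂
    simp [hA, hB, Module.End.mul_apply]
  have hshift : F - algebraMap ℂ _ (c₁ + c₂) = A + B := by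
    ext v₁ v₂
    simp [hF, hA, hB, hg₁def, hg₂def, Module.algebraMap_end_apply, sub_tmul, tmul_sub,
      TensorProduct.smul_tmul', TensorProduct.tmul_smul, add_smul]
    abel
  -- powers of A and B
  have hApow : ∀ i, a + 1 ≤ i → A ^ i = 0 := by
    intro i hi
    rw [hA, LinearMap.rTensor_pow]
    have : g₁ ^ i = 0 := by
      rw [← Nat.sub_add_cancel hi, pow_add, hg₁, mul_zero]
    rw [this, LinearMap.rTensor_zero]
  have hBpow : ∀ j, b + 1 ≤ j → B ^ j = 0 := by
    intro j hj
    rw [hB, LinearMap.lTensor_pow]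
    have : g₂ ^ j = 0 := by
      rw [← Nat.sub_add_cancel hj, pow_add, hg₂, mul_zero]
    rw [this, LinearMap.lTensor_zero]
  -- upper bound : (A + B) ^ (a+b+1) = 0
  have hupper : (A + B) ^ (a + b + 1) = 0 := by
    rw [hcomm.add_pow']
    apply Finset.sum_eq_zero
    rintro ⟨i, j⟩ hij
    rw [Finset.HasAntidiagonal.mem_antidiagonal] at hij
    rcases le_or_gt (a + 1) i with hi | hi
    · rw [hApow i hi, zero_mul, smul_zero]
    · have hj : b + 1 ≤ j := by omega
      rw [hBpow j hj, mul_zero, smul_zero]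
  -- lower bound : (A + B) ^ (a+b) ≠ 0
  obtain ⟨v₁, hv₁⟩ : ∃ v, (g₁ ^ a) v ≠ 0 := by
    by_contra h
    push_neg at h
    exact hg₁' (LinearMap.ext fun v => h v)
  obtain ⟨v₂, hv₂⟩ : ∃ v, (g₂ ^ b) v ≠ 0 := by
    by_contra h
    push_neg at h
    exact hg₂' (LinearMap.ext fun v => h v)
  have hlower : (A + B) ^ (a + b) ≠ 0 := by
    intro h
    have happ : ((A + B) ^ (a + b)) (v₁ ⊗ₜ[ℂ] v₂) = 0 := by rw [h]; rfl
    rw [hcomm.add_pow'] at happ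
    rw [LinearMap.coe_sum, Finset.sum_apply] at happ
    rw [Finset.sum_eq_single_of_mem (a, b) (by rw [Finset.HasAntidiagonal.mem_antidiagonal])] at happ
    · have : ((a+b).choose a) • ((g₁ ^ a) v₁ ⊗ₜ[ℂ] (g₂ ^ b) v₂) = 0 := by
        simpa [hA, hB, LinearMap.smul_apply, Module.End.mul_apply, LinearMap.rTensor_pow,
          LinearMap.lTensor_pow, LinearMap.rTensor_tmul, LinearMap.lTensor_tmul] using happ
      have hch : ((a+b).choose a : ℂ) ≠ 0 := by
        exact_mod_cast Nat.cast_ne_zero.mpr (Nat.choose_pos (by omega)).ne'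
      have htm := tmul_ne_zero' hv₁ hv₂
      rw [← Nat.cast_smul_eq_nsmul ℂ] at this
      exact (smul_ne_zero hch htm) this
    · rintro ⟨i, j⟩ hij hne
      rw [Finset.HasAntidiagonal.mem_antidiagonal] at hij
      have : i ≠ a ∨ j ≠ b := by
        by_contra hc
        push_neg at hc
        exact hne (by simp [hc.1, hc.2])
      simp only [LinearMap.smul_apply, Module.End.mul_apply]
      rcases this with hi | hj
      · rcases le_or_gt (a + 1) i with hi' | hi'
        · rw [hApow i hi', LinearMap.zero_apply, smul_zero]
        · have hj' : b + 1 ≤ j := by omega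
          rw [hBpow j hj', LinearMap.zero_apply, map_zero, smul_zero]
      · rcases le_or_gt (b + 1) j with hj' | hj'
        · rw [hBpow j hj', LinearMap.zero_apply, map_zero, smul_zero]
        · have hi' : a + 1 ≤ i := by omega
          rw [hApow i hi', LinearMap.zero_apply, smul_zero]
  -- now minpoly
  have haeval : aeval F ((X - C (c₁ + c₂)) ^ (a + b + 1)) = 0 := by
    rw [map_pow, map_sub, aeval_X, aeval_C, hshift, hupper]
  have hdvd := minpoly.dvd ℂ F haeval
  obtain ⟨m, hm_le, hassoc⟩ := (dvd_prime_pow (Polynomial.prime_X_sub_C (c₁ + c₂)) _).mp hdvd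
  have hint : IsIntegral ℂ F := Algebra.IsIntegral.isIntegral F
  have hmono : (minpoly ℂ F).Monic := minpoly.monic hint
  have heq : minpoly ℂ F = (X - C (c₁ + c₂)) ^ m :=
    Polynomial.eq_of_monic_of_associated hmono ((monic_X_sub_C _).pow _) hassoc
  rw [heq]
  congr 1
  by_contra hne
  have hm_lt : m ≤ a + b := by omega
  have : (A + B) ^ m = 0 := by
    have := minpoly.aeval ℂ F
    rw [heq, map_pow, map_sub, aeval_X, aeval_C, hshift] at this
    exact this
  apply hlower
  calc (A + B) ^ (a + b) = (A + B) ^ m * (A + B) ^ (a + b - m) := by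
        rw [← pow_add, Nat.add_sub_cancel' hm_lt]
    _ = 0 := by rw [this, zero_mul]
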